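/- The number of n×n integer matrices in lower Hermite normal form with determinant k > 0 equals the sum over all tuples (d_1,...,d_n) of positive integers with d_1···d_n = k of the product d_1^0 · d_2^1 ··· d_n^{n-1}. -/

import Mathlib

open Finset

/-- C is a lower triangular matrix in (lower) Hermite normal form. -/
def IsHermiteNF {n : ℕ} (C : Matrix (Fin n) (Fin n) ℤ) : Prop :=
  (∀ i j : Fin n, i < j → C i j = 0) ∧
  (∀ i : Fin n, 0 < C i i) ∧
  (∀ i j : Fin n, j < i → 0 ≤ C i j ∧ C i j < C i i)

namespace CountHNF

variable {n : ℕ}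

/-- Build a matrix from diagonal data `d` and strictly-lower data `c`. -/
def mk (d : Fin n → ℕ) (c : ∀ i : Fin n, Fin (i : ℕ) → Fin (d i)) :
    Matrix (Fin n) (Fin n) ℤ := fun i j =>
  if h : (j : ℕ) < (i : ℕ) then ((c i ⟨j, h⟩ : ℕ) : ℤ)
  else if i = j then (d i : ℤ) else 0

lemma mk_diag (d : Fin n → ℕ) (c) (i : Fin n) : mk d c i i = (d i : ℤ) := by
  simp [mk]

lemma mk_upper (d : Fin n → ℕ) (c) {i j : Fin n} (h : i < j) : mk d c i j = 0 := by
  have h1 : ¬ (j : ℕ) < (i : ℕ) := by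
    have := Fin.lt_def.mp h; omega
  have h2 : i ≠ j := h.ne
  simp [mk, h1, h2]

lemma mk_lower (d : Fin n → ℕ) (c) {i j : Fin n} (h : (j : ℕ) < (i : ℕ)) :
    mk d c i j = ((c i ⟨j, h⟩ : ℕ) : ℤ) := by
  simp [mk, h]

lemma mk_blockTriangular (d : Fin n → ℕ) (c) :
    (mk d c).BlockTriangular OrderDual.toDual := by
  intro i j hij
  exact mk_upper d c hij

lemma mk_det (d : Fin n → ℕ) (c) : (mk d c).det = ∏ i, (d i : ℤ) := by
  rw [Matrix.det_of_lowerTriangular _ (mk_blockTriangular d c)]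
  simp [mk_diag]

end CountHNF

theorem count_hnf (n k : ℕ) (hn : 1 ≤ n) (hk : 0 < k) :
    {C : Matrix (Fin n) (Fin n) ℤ | IsHermiteNF C ∧ C.det = (k : ℤ)}.ncard =
      ∑ d ∈ ((Fintype.piFinset fun _ : Fin n => k.divisors).filter fun d => ∏ i, d i = k),
        ∏ i : Fin n, d i ^ (i : ℕ) := by
  classical
  set D := ((Fintype.piFinset fun _ : Fin n => k.divisors).filter fun d => ∏ i, d i = k)
    with hD
  set S := {C : Matrix (Fin n) (Fin n) ℤ | IsHermiteNF C ∧ C.det = (k : ℤ)} with hS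
  have hpos : ∀ d : Fin n → ℕ, d ∈ D → ∀ i, 0 < d i := by
    intro d hd i
    simp only [hD, Finset.mem_filter, Fintype.mem_piFinset] at hd
    exact Nat.pos_of_mem_divisors (hd.1 i)
  have hprod : ∀ d : Fin n → ℕ, d ∈ D → ∏ i, d i = k := fun d hd =>
    (Finset.mem_filter.mp hd).2
  let F : (Σ d : {x // x ∈ D}, ∀ i : Fin n, Fin (i : ℕ) → Fin (d.1 i)) → S := fun p =>
    ⟨CountHNF.mk p.1.1 p.2, by
      constructor
      · refine ⟨fun i j hij => CountHNF.mk_upper _ _ hij, fun i => ?_, fun i j hij => ?_⟩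
        · rw [CountHNF.mk_diag]
          exact_mod_cast hpos _ p.1.2 i
        · rw [CountHNF.mk_lower _ _ (Fin.lt_def.mp hij), CountHNF.mk_diag]
          exact ⟨Int.natCast_nonneg _, by
            exact_mod_cast (p.2 i ⟨j, Fin.lt_def.mp hij⟩).isLt⟩
      · rw [CountHNF.mk_det, ← Nat.cast_prod, hprod _ p.1.2]⟩
  have hFbij : Function.Bijective F := by
    constructor
    · rintro ⟨⟨d, hd⟩, c⟩ ⟨⟨d', hd'⟩, c'⟩ h
      have hmat : CountHNF.mk d c = CountHNF.mk d' c' := congrArg Subtype.val h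
      have hdd : d = d' := by
        funext i
        have := congrFun (congrFun hmat i) i
        rw [CountHNF.mk_diag, CountHNF.mk_diag] at this
        exact_mod_cast this
      subst hdd
      have hcc : c = c' := by
        funext i j
        have h2 := congrFun (congrFun hmat i) ⟨(j : ℕ), j.isLt.trans i.isLt⟩
        have h3 := CountHNF.mk_lower d c (i := i) (j := ⟨(j : ℕ), j.isLt.trans i.isLt⟩) j.isLt
        have h4 := CountHNF.mk_lower d c' (i := i) (j := ⟨(j : ℕ), j.isLt.trans i.isLt⟩) j.isLt
        rw [h3, h4] at h2
        apply Fin.ext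
        exact_mod_cast h2
      subst hcc
      rfl
    · rintro ⟨C, ⟨⟨hup, hdiag, hlow⟩, hdet⟩⟩
      have hbt : C.BlockTriangular OrderDual.toDual := fun i j hij =>
        hup i j hij
      have hdet' : ∏ i, C i i = (k : ℤ) := by
        rw [← Matrix.det_of_lowerTriangular C hbt, hdet]
      set d : Fin n → ℕ := fun i => (C i i).toNat with hd
      have hdcast : ∀ i, (d i : ℤ) = C i i := fun i => Int.toNat_of_nonneg (hdiag i).le
      have hprodd : ∏ i, d i = k := by
        have : ((∏ i, d i : ℕ) : ℤ) = (k : ℤ) := by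
          rw [Nat.cast_prod]
          simp only [hdcast]
          exact hdet'
        exact_mod_cast this
      have hdD : d ∈ D := by
        simp only [hD, Finset.mem_filter, Fintype.mem_piFinset, Nat.mem_divisors]
        exact ⟨fun i => ⟨hprodd ▸ Finset.dvd_prod_of_mem d (Finset.mem_univ i), hk.ne'⟩,
          hprodd⟩
      refine ⟨⟨⟨d, hdD⟩, fun i j => ⟨(C i ⟨(j : ℕ), j.isLt.trans i.isLt⟩).toNat, ?_⟩⟩, ?_⟩
      · have hj : (⟨(j : ℕ), j.isLt.trans i.isLt⟩ : Fin n) < i := Fin.lt_def.mpr j.isLt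
        have := hlow i _ hj
        have h1 : C i ⟨(j : ℕ), j.isLt.trans i.isLt⟩ < (d i : ℤ) := (hdcast i).symm ▸ this.2
        show (C i ⟨(j : ℕ), j.isLt.trans i.isLt⟩).toNat < d i
        omega
      · apply Subtype.ext
        show CountHNF.mk d _ = C
        ext i j
        rcases lt_trichotomy (j : ℕ) (i : ℕ) with h | h | h
        · rw [CountHNF.mk_lower _ _ h]
          have h2 : (⟨(j : ℕ), j.isLt⟩ : Fin n) = j := by
            apply Fin.ext; rfl
          simp only []
          rw [show (⟨(⟨(j : ℕ), h⟩ : Fin (i:ℕ)) , (Fin.isLt _).trans i.isLt⟩ : Fin n) = j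
            from Fin.ext rfl]
          exact Int.toNat_of_nonneg (hlow i j (Fin.lt_def.mpr h)).1
        · have : i = j := Fin.ext h.symm
          subst this
          rw [CountHNF.mk_diag]
          exact hdcast i
        · rw [CountHNF.mk_upper _ _ (Fin.lt_def.mpr h)]
          exact (hup i j (Fin.lt_def.mpr h)).symm
  rw [← Nat.card_coe_set_eq, ← Nat.card_eq_of_bijective F hFbij,
    Nat.card_eq_fintype_card, Fintype.card_sigma]
  rw [← Finset.sum_coe_sort D (fun d => ∏ i : Fin n, d i ^ (i : ℕ))]
  congr 1
  funext d
  simp [Fintype.card_pi, Fintype.card_fun]
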